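/- With M = G×G and ω as above, Z = X₁ + X₂ for left-invariant X ∈ g, the condition i(Z)dω = 0 is equivalent to γ(ad X(U), V) + γ(U, ad X(V)) = 0 for all U,V ∈ g, i.e. to L_Xγ = 0 where X, γ are regarded as left-invariant tensor fields on G. -/
import Mathlib


/-!
Statement 12: With `M = G×G`, `ω = γ_{ij} π₁*ω^i ∧ π₂*ω^j`, and `Z = X₁ + X₂ = (X,X)`
for a left-invariant `X ∈ 𝔤` (satisfying the first locally-Hamiltonian condition, i.e.
`X` is `γ`-orthogonal to the derived algebra), the condition `i(Z)dω = 0` is equivalent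
to `γ(ad X(U), V) + γ(U, ad X(V)) = 0` for all `U, V ∈ 𝔤`, i.e. to `L_Xγ = 0`.

At the Lie-algebra level `dω` is the Chevalley–Eilenberg differential
`dω(U,V,W) = -ω([U,V],W) + ω([U,W],V) - ω([V,W],U)` (componentwise bracket on `𝔤×𝔤`),
and `i(Z)dω = 0` means `dω(Z,V,W) = 0` for all `V, W`.
-/

/-- The left-invariant 2-form `ω` on `G × G` evaluated on left-invariant fields. -/
def wGG {g : Type*} [LieRing g] [LieAlgebra ℝ g]
    (γ : g →ₗ[ℝ] g →ₗ[ℝ] ℝ) (A B : g × g) : ℝ :=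
  γ A.1 B.2 - γ B.1 A.2

/-- The Chevalley–Eilenberg differential of `ω` on left-invariant fields. -/
def dwGG {g : Type*} [LieRing g] [LieAlgebra ℝ g]
    (γ : g →ₗ[ℝ] g →ₗ[ℝ] ℝ) (U V W : g × g) : ℝ :=
  - wGG γ (⁅U.1, V.1⁆, ⁅U.2, V.2⁆) W
  + wGG γ (⁅U.1, W.1⁆, ⁅U.2, W.2⁆) V
  - wGG γ (⁅V.1, W.1⁆, ⁅V.2, W.2⁆) U

theorem iZdOmega_zero_iff_ad_skew {g : Type*} [LieRing g] [LieAlgebra ℝ g]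
    (γ : g →ₗ[ℝ] g →ₗ[ℝ] ℝ)
    (hsym : ∀ a b : g, γ a b = γ b a)
    (X : g)
    -- first locally-Hamiltonian condition: X ⊥_γ [𝔤,𝔤]
    (horth : ∀ u v : g, γ X ⁅u, v⁆ = 0) :
    (∀ V W : g × g, dwGG γ (X, X) V W = 0) ↔
      (∀ u v : g, γ ⁅X, u⁆ v + γ u ⁅X, v⁆ = 0) := by
  simp only [dwGG, wGG]
  constructor
  · intro h u v
    have := h (0, v) (u, 0)
    simp at this
    linarith
  · intro h V W
    have h1 := h V.1 W.2
    have h2 := h W.1 V.2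
    have h3 : γ ⁅V.1, W.1⁆ X = 0 := by rw [hsym]; exact horth _ _
    have h4 : γ X ⁅V.2, W.2⁆ = 0 := horth _ _
    linarith
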